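/- arXiv:1904.07984 — 2 statements merged into one kernel-verified Lean document; each statement's English description precedes it below -/
import Mathlib

section
/- Higher differential variant rule (dV^k): Let f be globally Lipschitz on ℝⁿ, p polynomial, k ≥ 1, ε > 0. Write L⁰p = p and Lⁱ⁺¹p = ∇(Lⁱp)·f. If Lᵏp(y) ≥ ε whenever ¬(p(y) ≥ 0) (resp. ¬(p(y) > 0)), then every solution φ of x' = f(x) satisfies p(φ(τ)) ≥ 0 (resp. > 0) for some τ ≥ 0. -/
open MvPolynomial Filter

/-- The Lie derivative of a polynomial `p` along a polynomial vector field `F`: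
`L_F p = ∑ i, (∂p/∂xᵢ) · Fᵢ`. -/
noncomputable def polyLieDeriv {n : ℕ} (F : Fin n → MvPolynomial (Fin n) ℝ)
    (p : MvPolynomial (Fin n) ℝ) : MvPolynomial (Fin n) ℝ :=
  ∑ i : Fin n, pderiv i p * F i

lemma polyLieDeriv_C {n : ℕ} (F : Fin n → MvPolynomial (Fin n) ℝ) (a : ℝ) :
    polyLieDeriv F (C a) = 0 := by
  simp [polyLieDeriv]

lemma polyLieDeriv_add {n : ℕ} (F : Fin n → MvPolynomial (Fin n) ℝ)
    (p q : MvPolynomial (Fin n) ℝ) :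
    polyLieDeriv F (p + q) = polyLieDeriv F p + polyLieDeriv F q := by
  simp [polyLieDeriv, add_mul, Finset.sum_add_distrib]

lemma polyLieDeriv_X {n : ℕ} (F : Fin n → MvPolynomial (Fin n) ℝ) (i : Fin n) :
    polyLieDeriv F (X i) = F i := by
  simp [polyLieDeriv, pderiv_X, Pi.single_apply]

lemma polyLieDeriv_mul {n : ℕ} (F : Fin n → MvPolynomial (Fin n) ℝ)
    (p q : MvPolynomial (Fin n) ℝ) :
    polyLieDeriv F (p * q) = polyLieDeriv F p * q + p * polyLieDeriv F q := by
  unfold polyLieDeriv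
  simp only [pderiv_mul, add_mul]
  rw [Finset.sum_add_distrib, Finset.sum_mul, Finset.mul_sum]
  congr 1
  · exact Finset.sum_congr rfl fun i _ => by ring
  · exact Finset.sum_congr rfl fun i _ => by ring

lemma hasDerivAt_eval_comp {n : ℕ} (F : Fin n → MvPolynomial (Fin n) ℝ)
    (φ : ℝ → (Fin n → ℝ)) {t : ℝ}
    (hφ : HasDerivAt φ (fun i => eval (φ t) (F i)) t)
    (q : MvPolynomial (Fin n) ℝ) :
    HasDerivAt (fun s => eval (φ s) q) (eval (φ t) (polyLieDeriv F q)) t := by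
  induction q using MvPolynomial.induction_on with
  | C a =>
    simpa [polyLieDeriv_C] using hasDerivAt_const t a
  | add p q hp hq =>
    simp only [polyLieDeriv_add, map_add]
    exact hp.add hq
  | mul_X p i hp =>
    have hx : HasDerivAt (fun s => φ s i) (eval (φ t) (F i)) t :=
      hasDerivAt_pi.mp hφ i
    have := hp.mul hx
    simp only [polyLieDeriv_mul, polyLieDeriv_X, map_add, map_mul, eval_X]
    exact this

lemma tendsto_of_hasDerivAt_ge {h h' : ℝ → ℝ} {c a : ℝ} (hc : 0 < c)
    (hd : ∀ t, a ≤ t → HasDerivAt h (h' t) t)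
    (hge : ∀ t, a ≤ t → c ≤ h' t) :
    Tendsto h atTop atTop := by
  have key : ∀ t, a ≤ t → h a + c * (t - a) ≤ h t := by
    intro t ht
    have := (convex_Ici a).mul_sub_le_image_sub_of_le_deriv
      (f := h) (C := c)
      (fun s hs => (hd s hs).continuousAt.continuousWithinAt)
      (fun s hs => by
        rw [interior_Ici] at hs
        exact (hd s hs.le).differentiableAt.differentiableWithinAt)
      (fun s hs => by
        rw [interior_Ici] at hs
        rw [(hd s hs.le).deriv]
        exact hge s hs.le)
      a Set.self_mem_Ici t ht ht
    linarith
  have hlin : Tendsto (fun t => h a + c * (t - a)) atTop atTop := by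
    apply tendsto_atTop_add_const_left
    exact (tendsto_atTop_add_const_right atTop (-a) tendsto_id).const_mul_atTop hc
  exact tendsto_atTop_mono' atTop
    ((eventually_ge_atTop a).mono fun t ht => key t ht) hlin

lemma tendsto_of_hasDerivAt_tendsto {h h' : ℝ → ℝ} {a : ℝ}
    (hd : ∀ t, a ≤ t → HasDerivAt h (h' t) t)
    (hh' : Tendsto h' atTop atTop) :
    Tendsto h atTop atTop := by
  obtain ⟨T, hT⟩ := eventually_atTop.mp (hh'.eventually_ge_atTop 1)
  exact tendsto_of_hasDerivAt_ge (a := max a T) one_pos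
    (fun t ht => hd t ((le_max_left a T).trans ht))
    (fun t ht => hT t ((le_max_right a T).trans ht))

lemma dV_aux {n : ℕ} (F : Fin n → MvPolynomial (Fin n) ℝ)
    (φ : ℝ → (Fin n → ℝ))
    (hsol : ∀ t : ℝ, 0 ≤ t → HasDerivAt φ (fun i => eval (φ t) (F i)) t)
    (p : MvPolynomial (Fin n) ℝ) (k : ℕ) (hk : 1 ≤ k) {ε : ℝ} (hε : 0 < ε)
    (hgk : ∀ t, 0 ≤ t → ε ≤ eval (φ t) ((polyLieDeriv F)^[k] p)) :
    ∃ τ : ℝ, 0 ≤ τ ∧ 0 < eval (φ τ) p := by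
  set g : ℕ → ℝ → ℝ := fun i t => eval (φ t) ((polyLieDeriv F)^[i] p) with hg
  have hder : ∀ i t, 0 ≤ t → HasDerivAt (g i) (g (i + 1) t) t := by
    intro i t ht
    have := hasDerivAt_eval_comp F φ (hsol t ht) ((polyLieDeriv F)^[i] p)
    simpa [hg, Function.iterate_succ_apply'] using this
  have main : ∀ m, m ≤ k - 1 → Tendsto (g (k - 1 - m)) atTop atTop := by
    intro m
    induction m with
    | zero =>
      intro _
      refine tendsto_of_hasDerivAt_ge (a := 0) (h' := g k) hε
        (fun t ht => ?_) (fun t ht => hgk t ht)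
      have h1 := hder (k - 1) t ht
      rwa [Nat.sub_add_cancel hk] at h1
    | succ m ih =>
      intro hm
      have ih' := ih (by omega)
      refine tendsto_of_hasDerivAt_tendsto (a := 0) (fun t ht => ?_) ih'
      have h1 := hder (k - 1 - (m + 1)) t ht
      have he : k - 1 - (m + 1) + 1 = k - 1 - m := by omega
      rwa [he] at h1
  have h0 := main (k - 1) le_rfl
  rw [Nat.sub_self] at h0
  have hgz : g 0 = fun t => eval (φ t) p := by
    funext t; simp [hg]
  rw [hgz] at h0
  obtain ⟨τ, hτ0, hτp⟩ :=
    ((eventually_ge_atTop (0 : ℝ)).and (h0.eventually_gt_atTop 0)).exists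
  exact ⟨τ, hτ0, hτp⟩

/-- Higher differential variant rule dV^k: if the `k`-th Lie derivative of `p`
along the globally Lipschitz polynomial vector field `f` is at least `ε > 0`
wherever `¬(p ≥ 0)` (resp. `¬(p > 0)`), then along every (globally existing)
solution `p` eventually becomes `≥ 0` (resp. `> 0`). -/
theorem dV_higher (n : ℕ) (F : Fin n → MvPolynomial (Fin n) ℝ)
    (f : (Fin n → ℝ) → (Fin n → ℝ)) (hfF : f = fun x i => eval x (F i))
    (K : NNReal) (hf : LipschitzWith K f)
    (p : MvPolynomial (Fin n) ℝ) (k : ℕ) (hk : 1 ≤ k) (ε : ℝ) (hε : 0 < ε)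
    (φ : ℝ → (Fin n → ℝ)) (hsol : ∀ t : ℝ, 0 ≤ t → HasDerivAt φ (f (φ t)) t) :
    ((∀ y : Fin n → ℝ, ¬ (0 ≤ eval y p) →
        ε ≤ eval y ((polyLieDeriv F)^[k] p)) →
      ∃ τ : ℝ, 0 ≤ τ ∧ 0 ≤ eval (φ τ) p) ∧
    ((∀ y : Fin n → ℝ, ¬ (0 < eval y p) →
        ε ≤ eval y ((polyLieDeriv F)^[k] p)) →
      ∃ τ : ℝ, 0 ≤ τ ∧ 0 < eval (φ τ) p) := by
  subst hfF
  have hsol' : ∀ t : ℝ, 0 ≤ t → HasDerivAt φ (fun i => eval (φ t) (F i)) t :=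
    fun t ht => hsol t ht
  constructor
  · intro hyp
    by_contra hcon
    push_neg at hcon
    have hgk : ∀ t, 0 ≤ t → ε ≤ eval (φ t) ((polyLieDeriv F)^[k] p) :=
      fun t ht => hyp _ (not_le.mpr (hcon t ht))
    obtain ⟨τ, hτ, hpos⟩ := dV_aux F φ hsol' p k hk hε hgk
    exact absurd hpos (not_lt.mpr (hcon τ hτ).le)
  · intro hyp
    by_contra hcon
    push_neg at hcon
    have hgk : ∀ t, 0 ≤ t → ε ≤ eval (φ t) ((polyLieDeriv F)^[k] p) :=
      fun t ht => hyp _ (not_lt.mpr (hcon t ht))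
    obtain ⟨τ, hτ, hpos⟩ := dV_aux F φ hsol' p k hk hε hgk
    exact absurd hpos (not_lt.mpr (hcon τ hτ))
end

section
/- Differential variant with closed domain constraint (dV≥&): Let f be globally Lipschitz, p polynomial, Q ⊆ ℝⁿ closed, ε > 0. Let φ be the solution from x₀ with p(x₀) < 0, and assume (i) for all t, if p(φ(s)) < 0 for all s ∈ [0,t] then φ(t) ∈ Q; and (ii) ∇p(y)·f(y) ≥ ε for all y ∈ Q with p(y) < 0. Then there exists τ with p(φ(τ)) ≥ 0 and φ(s) ∈ Q for all s ∈ [0,τ]. -/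
open MvPolynomial

lemma eval_hasDerivAt {n : ℕ} (p : MvPolynomial (Fin n) ℝ) (φ : ℝ → (Fin n → ℝ))
    (φ' : Fin n → ℝ) (t : ℝ) (hφ : HasDerivAt φ φ' t) :
    HasDerivAt (fun s => eval (φ s) p) (∑ i : Fin n, eval (φ t) (pderiv i p) * φ' i) t := by
  induction p using MvPolynomial.induction_on with
  | C a =>
      simpa using (hasDerivAt_const t a)
  | add q r hq hr =>
      have := hq.add hr
      simp only [map_add, add_mul, Finset.sum_add_distrib] at this ⊢
      exact this
  | mul_X q i hq =>
      have hxi : HasDerivAt (fun s => φ s i) (φ' i) t := hasDerivAt_pi.1 hφ i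
      have := hq.mul hxi
      simp only [map_mul, eval_X] at this ⊢
      convert this using 1
      case e'_4 => rfl
      case e'_5 => rfl
      case e'_8 => rfl
      have : ∀ j : Fin n, eval (φ t) (pderiv j (q * X i)) * φ' j =
          eval (φ t) (pderiv j q) * φ t i * φ' j
            + (if i = j then eval (φ t) q * φ' j else 0) := by
        intro j
        rw [pderiv_mul, pderiv_X]
        by_cases h : i = j <;> simp [h, Pi.single_apply] <;> ring
      rw [Finset.sum_congr rfl fun j _ => this j, Finset.sum_add_distrib,
        Finset.sum_ite_eq (Finset.univ) i (fun j => eval (φ t) q * φ' j)]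
      simp only [Finset.mem_univ, if_true, Finset.sum_mul]
      congr 1
      exact Finset.sum_congr rfl fun j _ => by ring

/-- Differential variant with closed domain constraint dV≥&: with `f` globally
Lipschitz, `Q` closed, `p(x₀) < 0`, if the solution stays in `Q` while `p < 0`
and the Lie derivative of `p` is at least `ε > 0` on `Q ∩ {p < 0}`, then the
solution reaches `{p ≥ 0}` while staying in `Q` the whole time. -/
theorem dV_ge_domain (n : ℕ) (f : (Fin n → ℝ) → (Fin n → ℝ)) (K : NNReal)
    (hf : LipschitzWith K f) (p : MvPolynomial (Fin n) ℝ)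
    (Q : Set (Fin n → ℝ)) (hQ : IsClosed Q) (ε : ℝ) (hε : 0 < ε)
    (φ : ℝ → (Fin n → ℝ)) (hsol : ∀ t : ℝ, 0 ≤ t → HasDerivAt φ (f (φ t)) t)
    (hx₀ : eval (φ 0) p < 0)
    (hdom : ∀ t : ℝ, 0 ≤ t → (∀ s ∈ Set.Icc (0:ℝ) t, eval (φ s) p < 0) → φ t ∈ Q)
    (hlie : ∀ y ∈ Q, eval y p < 0 →
      ε ≤ ∑ i : Fin n, eval y (pderiv i p) * f y i) :
    ∃ τ : ℝ, 0 ≤ τ ∧ 0 ≤ eval (φ τ) p ∧ ∀ s ∈ Set.Icc (0:ℝ) τ, φ s ∈ Q := by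
  set g : ℝ → ℝ := fun s => eval (φ s) p with hg
  have hgderiv : ∀ t : ℝ, 0 ≤ t →
      HasDerivAt g (∑ i : Fin n, eval (φ t) (pderiv i p) * f (φ t) i) t :=
    fun t ht => eval_hasDerivAt p φ (f (φ t)) t (hsol t ht)
  have hgcont : ContinuousOn g (Set.Ici (0:ℝ)) :=
    fun t ht => ((hgderiv t ht).continuousAt).continuousWithinAt
  -- Step 1: there exists t ≥ 0 with 0 ≤ g t
  have hex : ∃ t : ℝ, 0 ≤ t ∧ 0 ≤ g t := by
    by_contra hcon
    push_neg at hcon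
    have hneg : ∀ t : ℝ, 0 ≤ t → g t < 0 := fun t ht => hcon t ht
    have hQall : ∀ t : ℝ, 0 ≤ t → φ t ∈ Q := fun t ht =>
      hdom t ht (fun s hs => hneg s hs.1)
    set T : ℝ := (1 - g 0) / ε with hT
    have hT0 : 0 < T := by
      apply div_pos _ hε
      have := hx₀
      simp only [hg] at *
      linarith
    -- h := g - ε • id is monotone on [0, T]
    have hmono : MonotoneOn (fun s => g s - ε * s) (Set.Icc 0 T) := by
      apply monotoneOn_of_hasDerivWithinAt_nonneg (convex_Icc 0 T)
        (f' := fun s => (∑ i : Fin n, eval (φ s) (pderiv i p) * f (φ s) i) - ε)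
      · exact (hgcont.mono (fun x hx => hx.1)).sub (continuousOn_const.mul continuousOn_id)
      · intro x hx
        rw [interior_Icc] at hx
        have := ((hgderiv x hx.1.le).sub
          ((hasDerivAt_id x).const_mul ε)).hasDerivWithinAt
          (s := interior (Set.Icc 0 T))
        simp only [id_eq, mul_one] at this
        exact this
      · intro x hx
        rw [interior_Icc] at hx
        have := hlie (φ x) (hQall x hx.1.le) (hneg x hx.1.le)
        linarith
    have := hmono (Set.left_mem_Icc.2 hT0.le) (Set.right_mem_Icc.2 hT0.le) hT0.le
    have hgT : g 0 + ε * T ≤ g T := by dsimp at this; linarith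
    have : ε * T = 1 - g 0 := by
      rw [hT]; field_simp
    have : (0:ℝ) < g T := by linarith
    exact absurd (hneg T hT0.le) (by linarith)
  -- Step 2: take the infimum
  set S : Set ℝ := Set.Ici (0:ℝ) ∩ {t | 0 ≤ g t} with hS
  have hSne : S.Nonempty := ⟨hex.choose, hex.choose_spec.1, hex.choose_spec.2⟩
  have hSbdd : BddBelow S := ⟨0, fun t ht => ht.1⟩
  have hSclosed : IsClosed S :=
    hgcont.preimage_isClosed_of_isClosed isClosed_Ici isClosed_Ici
  set τ : ℝ := sInf S with hτ
  have hτS : τ ∈ S := hSclosed.csInf_mem hSne hSbdd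
  have hτ0 : 0 ≤ τ := hτS.1
  have hτpos : 0 < τ := by
    rcases eq_or_lt_of_le hτ0 with h | h
    · exfalso; have := hτS.2; rw [← h] at this; exact absurd hx₀ (by simpa [hg] using this)
    · exact h
  have hlt : ∀ s, 0 ≤ s → s < τ → g s < 0 := by
    intro s hs0 hsτ
    by_contra h
    push_neg at h
    exact absurd (csInf_le hSbdd ⟨hs0, h⟩) (not_le.2 hsτ)
  have hQico : ∀ s ∈ Set.Ico (0:ℝ) τ, φ s ∈ Q := by
    intro s hs
    exact hdom s hs.1 (fun u hu => hlt u hu.1 (lt_of_le_of_lt hu.2 hs.2))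
  refine ⟨τ, hτ0, hτS.2, ?_⟩
  intro s hs
  rcases eq_or_lt_of_le hs.2 with h | h
  · -- s = τ : limit argument
    subst h
    have hmem : τ ∈ closure (Set.Ico (0:ℝ) τ) := by
      rw [closure_Ico hτpos.ne]
      exact Set.right_mem_Icc.2 hτpos.le
    have hne : (nhdsWithin τ (Set.Ico (0:ℝ) τ)).NeBot :=
      mem_closure_iff_nhdsWithin_neBot.1 hmem
    have htend : Filter.Tendsto φ (nhdsWithin τ (Set.Ico (0:ℝ) τ)) (nhds (φ τ)) :=
      ((hsol τ hτ0).continuousAt).continuousWithinAt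
    exact hQ.mem_of_tendsto htend
      (Filter.eventually_of_mem self_mem_nhdsWithin (fun u hu => hQico u hu))
  · exact hQico s ⟨hs.1, h⟩
end
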